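/- Let m and k be positive integers. Consider the assignment problem with couples with 4m hospitals H = {h₁,…,h_{2m}, h'₁,…,h'_{2m}}; 2m(2k+1) single interns, each of whose M-rows equals 1/(2m) at every h'_j and 0 at every h_j; and m(2k+1) couples, each of whose members' M-rows equal 1/(2m) at every h_j and 0 at every h'_j. Then every hospital has capacity 2k+1, and every convex combination {(λ^k, M^k)}_{k=1}^K of deterministic assignment matrices has approximation error at least 2/(2k+1). -/
import Mathlib


open Finset

/-- `(S, C, H, M)` (with `I`, `H` types of interns and hospitals) is an assignment problem
with couples: `S` is the set of single interns, `C` the set of couples (ordered pairs of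
members), every intern is a single or a member of a couple, members of couples are distinct
from each other, from the singles, and from members of other couples, `M ∈ [0,1]^{I×H}`,
each row of `M` sums to `1`, and both members of a couple have identical rows. -/
def IsCouplesProblem {I H : Type*} [Fintype I] [Fintype H]
    (S : Finset I) (C : Finset (I × I)) (M : I → H → ℝ) : Prop :=
  (∀ i : I, i ∈ S ∨ ∃ c ∈ C, i = c.1 ∨ i = c.2) ∧
  (∀ c ∈ C, c.1 ∉ S ∧ c.2 ∉ S ∧ c.1 ≠ c.2) ∧
  (∀ c ∈ C, ∀ c' ∈ C, c ≠ c' →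
    c.1 ≠ c'.1 ∧ c.1 ≠ c'.2 ∧ c.2 ≠ c'.1 ∧ c.2 ≠ c'.2) ∧
  (∀ (i : I) (h : H), 0 ≤ M i h ∧ M i h ≤ 1) ∧
  (∀ i : I, ∑ h : H, M i h = 1) ∧
  (∀ c ∈ C, ∀ h : H, M c.1 h = M c.2 h)

/-- `M'` is a deterministic assignment matrix with respect to the problem with couples `C`
and target matrix `M`: its entries are in `{0,1}`, rows sum to `1`, both members of each
couple have identical rows, and each column sum equals the capacity `q_h = ∑ i, M i h`. -/
def IsDeterministicAssignment {I H : Type*} [Fintype I] [Fintype H]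
    (C : Finset (I × I)) (M M' : I → H → ℝ) : Prop :=
  (∀ (i : I) (h : H), M' i h = 0 ∨ M' i h = 1) ∧
  (∀ i : I, ∑ h : H, M' i h = 1) ∧
  (∀ c ∈ C, ∀ h : H, M' c.1 h = M' c.2 h) ∧
  (∀ h : H, ∑ i : I, M' i h = ∑ i : I, M i h)


/-- Interns in the small-probabilities example: `2m(2k+1)` singles (the left summand) and
`m(2k+1)` couples, each couple having two members indexed by `Bool` (the right summand). -/
abbrev SPIntern (m k : ℕ) := Fin (2 * m * (2 * k + 1)) ⊕ (Fin (m * (2 * k + 1)) × Bool)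

/-- Hospitals in the small-probabilities example: `(true, j)` is `h_j` and `(false, j)` is
`h'_j`, for `j ∈ {1, …, 2m}`. -/
abbrev SPHospital (m : ℕ) := Bool × Fin (2 * m)

/-- The target matrix of the small-probabilities example: each single gets probability
`1/(2m)` at each `h'_j` (and `0` at each `h_j`), and each member of a couple gets
probability `1/(2m)` at each `h_j` (and `0` at each `h'_j`). -/
noncomputable def spM (m k : ℕ) : SPIntern m k → SPHospital m → ℝ
  | Sum.inl _, (b, _) => if b then 0 else 1 / (2 * m)
  | Sum.inr _, (b, _) => if b then 1 / (2 * m) else 0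

/-- The set of single interns of the small-probabilities example. -/
def spS (m k : ℕ) : Finset (SPIntern m k) := Finset.univ.image Sum.inl

/-- The set of couples of the small-probabilities example. -/
def spC (m k : ℕ) : Finset (SPIntern m k × SPIntern m k) :=
  Finset.univ.image fun j : Fin (m * (2 * k + 1)) =>
    (Sum.inr (j, false), Sum.inr (j, true))

lemma spM_nonneg (m k : ℕ) (i : SPIntern m k) (h : SPHospital m) : 0 ≤ spM m k i h := by
  obtain ⟨b, t⟩ := h
  rcases i with a | p <;> cases b <;> simp [spM]

lemma spM_col (m k : ℕ) (hm : 0 < m) (h : SPHospital m) :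
    ∑ i : SPIntern m k, spM m k i h = 2 * k + 1 := by
  obtain ⟨b, t⟩ := h
  have hm' : (m:ℝ) ≠ 0 := Nat.cast_ne_zero.mpr hm.ne'
  rw [Fintype.sum_sum_type]
  cases b <;> simp [spM, Finset.sum_const, Fintype.card_prod, nsmul_eq_mul] <;>
    field_simp <;> ring

lemma spM_row (m k : ℕ) (hm : 0 < m) (i : SPIntern m k) :
    ∑ h : SPHospital m, spM m k i h = 1 := by
  have hm' : (m:ℝ) ≠ 0 := Nat.cast_ne_zero.mpr hm.ne'
  rw [Fintype.sum_prod_type, Fintype.sum_bool]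
  rcases i with a | p <;> simp [spM, Finset.sum_const, nsmul_eq_mul] <;> field_simp <;> ring

lemma spC_mem (m k : ℕ) (p : Fin (m * (2 * k + 1))) :
    (Sum.inr (p, false), Sum.inr (p, true)) ∈ spC m k :=
  Finset.mem_image.mpr ⟨p, Finset.mem_univ p, rfl⟩

lemma singles_col (m k : ℕ) (M' : SPIntern m k → SPHospital m → ℝ)
    (h01 : ∀ i h, M' i h = 0 ∨ M' i h = 1)
    (hc : ∀ c ∈ spC m k, ∀ h, M' c.1 h = M' c.2 h)
    (t : Fin (2 * m))
    (hcol : ∑ i : SPIntern m k, M' i (true, t) = 2 * k + 1) :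
    (1:ℝ) ≤ ∑ i : Fin (2 * m * (2 * k + 1)), M' (Sum.inl i) (true, t) := by
  set h : SPHospital m := (true, t) with hh
  have hcpl : ∀ p : Fin (m * (2 * k + 1)),
      M' (Sum.inr (p, false)) h = M' (Sum.inr (p, true)) h :=
    fun p => hc _ (spC_mem m k p) h
  rw [Fintype.sum_sum_type, Fintype.sum_prod_type] at hcol
  have h2 : ∑ p : Fin (m * (2 * k + 1)), ∑ b : Bool, M' (Sum.inr (p, b)) h
      = 2 * ∑ p : Fin (m * (2 * k + 1)), M' (Sum.inr (p, true)) h := by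
    rw [Finset.mul_sum]
    refine Finset.sum_congr rfl fun p _ => ?_
    rw [Fintype.sum_bool, ← hcpl p]; ring
  rw [h2] at hcol
  have key : ∀ {α : Type} [Fintype α] (f : α → ℝ), (∀ a, f a = 0 ∨ f a = 1) →
      ∑ a, f a = ((Finset.univ.filter fun a => f a = 1).card : ℝ) := by
    intro α _ f hf
    rw [← Finset.sum_boole]
    refine Finset.sum_congr rfl fun a _ => ?_
    rcases hf a with h0 | h1
    · simp [h0]
    · simp [h1]
  have hS := key (fun i => M' (Sum.inl i) h) (fun i => h01 _ _)
  have hT := key (fun p => M' (Sum.inr (p, true)) h) (fun p => h01 _ _)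
  set N := (Finset.univ.filter fun i : Fin (2 * m * (2 * k + 1)) => M' (Sum.inl i) h = 1).card
  set N' := (Finset.univ.filter fun p : Fin (m * (2 * k + 1)) => M' (Sum.inr (p, true)) h = 1).card
  rw [hS, hT] at hcol
  have hnat : N + 2 * N' = 2 * k + 1 := by exact_mod_cast hcol
  have : 1 ≤ N := by omega
  rw [hS]
  exact_mod_cast this

/-- in the small-probabilities example (for positive `m`, `k`), the
problem is a valid assignment problem with couples, every hospital has capacity `2k+1`,
and every convex combination of deterministic assignment matrices has approximation error
at least `2 / (2k + 1)`. -/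
theorem lower_bound_small_probabilities (m k : ℕ) (hm : 0 < m) (hk : 0 < k) :
    IsCouplesProblem (spS m k) (spC m k) (spM m k) ∧
    (∀ h : SPHospital m, ∑ i : SPIntern m k, spM m k i h = 2 * k + 1) ∧
    ∀ (K : ℕ) (lam : Fin K → ℝ) (Ms : Fin K → SPIntern m k → SPHospital m → ℝ),
      (∀ j, 0 ≤ lam j) → ∑ j, lam j = 1 →
      (∀ j, IsDeterministicAssignment (spC m k) (spM m k) (Ms j)) →
      ∃ i : SPIntern m k,
        2 / (2 * (k : ℝ) + 1) ≤ ∑ h : SPHospital m, |spM m k i h - ∑ j, lam j * Ms j i h| := by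
  have hm' : (m:ℝ) ≠ 0 := Nat.cast_ne_zero.mpr hm.ne'
  refine ⟨⟨?_, ?_, ?_, ?_, fun i => spM_row m k hm i, ?_⟩, fun h => spM_col m k hm h, ?_⟩
  · -- every intern single or in couple
    rintro (a | ⟨p, b⟩)
    · exact Or.inl (Finset.mem_image.mpr ⟨a, Finset.mem_univ a, rfl⟩)
    · refine Or.inr ⟨_, spC_mem m k p, ?_⟩
      cases b
      · exact Or.inl rfl
      · exact Or.inr rfl
  · -- couple members not single, distinct
    intro c hcmem
    obtain ⟨p, -, rfl⟩ := Finset.mem_image.mp hcmem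
    refine ⟨?_, ?_, by simp⟩ <;>
    · intro hmem
      obtain ⟨a, -, ha⟩ := Finset.mem_image.mp hmem
      exact Sum.inl_ne_inr ha
  · -- distinct couples disjoint
    intro c hcmem c' hcmem' hne
    obtain ⟨p, -, rfl⟩ := Finset.mem_image.mp hcmem
    obtain ⟨p', -, rfl⟩ := Finset.mem_image.mp hcmem'
    have hpp : p ≠ p' := by rintro rfl; exact hne rfl
    refine ⟨?_, ?_, ?_, ?_⟩ <;> simp [hpp]
  · -- entries in [0,1]
    intro i h
    refine ⟨spM_nonneg m k i h, ?_⟩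
    obtain ⟨b, t⟩ := h
    have h1 : (1:ℝ) / (2 * m) ≤ 1 := by
      rw [div_le_one (by positivity)]
      have : (1:ℝ) ≤ (m:ℝ) := by exact_mod_cast hm
      linarith
    have h2 : (1:ℝ) / (2 * m) = (m:ℝ)⁻¹ * 2⁻¹ := by
      rw [one_div, mul_inv]; ring
    rcases i with a | p <;> cases b <;> simp [spM] <;> rw [← h2] <;> exact h1
  · -- couple rows equal
    intro c hcmem h
    obtain ⟨p, -, rfl⟩ := Finset.mem_image.mp hcmem
    obtain ⟨b, t⟩ := h
    rfl
  · -- main lower bound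
    intro K lam Ms hlam hsumlam hdet
    set A : SPIntern m k → SPHospital m → ℝ := fun i h => ∑ j, lam j * Ms j i h with hA
    have hMsnn : ∀ j i h, 0 ≤ Ms j i h := by
      intro j i h
      rcases (hdet j).1 i h with h0 | h1
      · rw [h0]
      · rw [h1]; norm_num
    have hAnn : ∀ i h, 0 ≤ A i h := fun i h =>
      Finset.sum_nonneg fun j _ => mul_nonneg (hlam j) (hMsnn j i h)
    have hArow : ∀ i, ∑ h : SPHospital m, A i h = 1 := by
      intro i
      calc ∑ h : SPHospital m, A i h = ∑ j, lam j * ∑ h : SPHospital m, Ms j i h := by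
            rw [Finset.sum_comm]
            refine Finset.sum_congr rfl fun j _ => ?_
            rw [Finset.mul_sum]
        _ = ∑ j, lam j := Finset.sum_congr rfl fun j _ => by rw [(hdet j).2.1 i, mul_one]
        _ = 1 := hsumlam
    have hSj : ∀ j, (2*(m:ℝ)) ≤
        ∑ i : Fin (2*m*(2*k+1)), ∑ t : Fin (2*m), Ms j (Sum.inl i) (true, t) := by
      intro j
      rw [Finset.sum_comm]
      calc (2*(m:ℝ)) = ∑ _t : Fin (2*m), (1:ℝ) := by
            rw [Finset.sum_const, Finset.card_univ, Fintype.card_fin, nsmul_eq_mul, mul_one]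
            push_cast; ring
        _ ≤ ∑ t : Fin (2*m), ∑ i : Fin (2*m*(2*k+1)), Ms j (Sum.inl i) (true, t) :=
          Finset.sum_le_sum fun t _ => singles_col m k (Ms j) (hdet j).1 (hdet j).2.2.1 t
            (by rw [(hdet j).2.2.2 (true, t), spM_col m k hm])
    have hswap : ∑ i : Fin (2*m*(2*k+1)), ∑ t : Fin (2*m), A (Sum.inl i) (true, t)
        = ∑ j, lam j * ∑ i : Fin (2*m*(2*k+1)), ∑ t : Fin (2*m), Ms j (Sum.inl i) (true, t) := by
      simp only [hA]
      calc ∑ i : Fin (2*m*(2*k+1)), ∑ t : Fin (2*m), ∑ j, lam j * Ms j (Sum.inl i) (true,t)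
          = ∑ i : Fin (2*m*(2*k+1)), ∑ j, ∑ t : Fin (2*m), lam j * Ms j (Sum.inl i) (true,t) :=
            Finset.sum_congr rfl fun i _ => Finset.sum_comm
        _ = ∑ j, ∑ i : Fin (2*m*(2*k+1)), ∑ t : Fin (2*m), lam j * Ms j (Sum.inl i) (true,t) :=
            Finset.sum_comm
        _ = ∑ j, lam j * ∑ i : Fin (2*m*(2*k+1)), ∑ t : Fin (2*m), Ms j (Sum.inl i) (true,t) := by
            refine Finset.sum_congr rfl fun j _ => ?_
            rw [Finset.mul_sum]
            refine Finset.sum_congr rfl fun i _ => ?_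
            rw [Finset.mul_sum]
    have hTot : (2*(m:ℝ)) ≤ ∑ i : Fin (2*m*(2*k+1)), ∑ t : Fin (2*m), A (Sum.inl i) (true,t) := by
      rw [hswap]
      calc (2*(m:ℝ)) = ∑ j, lam j * (2*(m:ℝ)) := by rw [← Finset.sum_mul, hsumlam, one_mul]
        _ ≤ ∑ j, lam j * ∑ i : Fin (2*m*(2*k+1)), ∑ t : Fin (2*m), Ms j (Sum.inl i) (true,t) :=
          Finset.sum_le_sum fun j _ => mul_le_mul_of_nonneg_left (hSj j) (hlam j)
    have hcard : 0 < 2*m*(2*k+1) := by positivity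
    have hk0 : (0:ℝ) < 2*(k:ℝ)+1 := by positivity
    obtain ⟨i0, hi0⟩ : ∃ i0 : Fin (2*m*(2*k+1)),
        1/(2*(k:ℝ)+1) ≤ ∑ t : Fin (2*m), A (Sum.inl i0) (true,t) := by
      by_contra hcon
      push_neg at hcon
      have hne : (Finset.univ : Finset (Fin (2*m*(2*k+1)))).Nonempty :=
        ⟨⟨0, hcard⟩, Finset.mem_univ _⟩
      have hlt := Finset.sum_lt_sum_of_nonempty hne fun i _ => hcon i
      rw [Finset.sum_const, Finset.card_univ, Fintype.card_fin, nsmul_eq_mul] at hlt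
      have hcast : ((2*m*(2*k+1) : ℕ):ℝ) * (1/(2*(k:ℝ)+1)) = 2*(m:ℝ) := by
        push_cast
        field_simp
      rw [hcast] at hlt
      linarith
    refine ⟨Sum.inl i0, ?_⟩
    show 2 / (2*(k:ℝ)+1) ≤ ∑ h : SPHospital m, |spM m k (Sum.inl i0) h - A (Sum.inl i0) h|
    set s := ∑ t : Fin (2*m), A (Sum.inl i0) (true,t) with hs
    have hsplit : ∑ h : SPHospital m, |spM m k (Sum.inl i0) h - A (Sum.inl i0) h|
        = ∑ t : Fin (2*m), |spM m k (Sum.inl i0) (true,t) - A (Sum.inl i0) (true,t)|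
          + ∑ t : Fin (2*m), |spM m k (Sum.inl i0) (false,t) - A (Sum.inl i0) (false,t)| := by
      rw [Fintype.sum_prod_type, Fintype.sum_bool]
    have htrue : ∑ t : Fin (2*m), |spM m k (Sum.inl i0) (true,t) - A (Sum.inl i0) (true,t)| = s := by
      rw [hs]
      refine Finset.sum_congr rfl fun t _ => ?_
      have h0 : spM m k (Sum.inl i0) (true,t) = 0 := by simp [spM]
      rw [h0, zero_sub, abs_neg, abs_of_nonneg (hAnn _ _)]
    have hfalse_spM : ∑ t : Fin (2*m), spM m k (Sum.inl i0) (false,t) = 1 := by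
      have he : ∀ t : Fin (2*m), spM m k (Sum.inl i0) (false,t) = 1/(2*(m:ℝ)) := fun t => by
        simp [spM]
      rw [Finset.sum_congr rfl fun t _ => he t, Finset.sum_const, Finset.card_univ,
        Fintype.card_fin, nsmul_eq_mul]
      push_cast
      field_simp
    have hfalseA : ∑ t : Fin (2*m), A (Sum.inl i0) (false,t) = 1 - s := by
      have h1 := hArow (Sum.inl i0)
      rw [Fintype.sum_prod_type, Fintype.sum_bool, ← hs] at h1
      linarith
    have hfb : s ≤ ∑ t : Fin (2*m), |spM m k (Sum.inl i0) (false,t) - A (Sum.inl i0) (false,t)| := by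
      have hle := Finset.sum_le_sum (s := (Finset.univ : Finset (Fin (2*m))))
        fun t _ => le_abs_self (spM m k (Sum.inl i0) (false,t) - A (Sum.inl i0) (false,t))
      rw [Finset.sum_sub_distrib, hfalse_spM, hfalseA] at hle
      linarith
    rw [hsplit, htrue]
    have h2 : 2 / (2*(k:ℝ)+1) = 2 * (1/(2*(k:ℝ)+1)) := by ring
    rw [h2]
    linarith
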